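/- arXiv:0806.4255 — 2 statements merged into one kernel-verified Lean document; each statement's English description precedes it below -/
import Mathlib

section
/- The map s satisfies the symmetric-space identity s_x ∘ s_y ∘ s_x = s_{s_x(y)} for all x, y in S. -/
noncomputable section

/-- `V n` : the symplectic vector space `ℝ^{2n}` presented as pairs of `n`-vectors. -/
abbrev V (n : ℕ) := (Fin n → ℝ) × (Fin n → ℝ)

/-- The standard symplectic bilinear form `ω⁰` on `ℝ^{2n}`. -/
def omega0 {n : ℕ} (x y : V n) : ℝ := ∑ i, (x.1 i * y.2 i - x.2 i * y.1 i)

/-- The space `S = ℝ × ℝ^{2n} × ℝ` with coordinates `(a, x, z)`. -/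
abbrev S (n : ℕ) := ℝ × V n × ℝ

/-- The geodesic symmetry `s_{(a,x,z)}(a',x',z')`. -/
def sym {n : ℕ} (p q : S n) : S n :=
  (2 * p.1 - q.1,
   (2 * Real.cosh (p.1 - q.1)) • p.2.1 - q.2.1,
   2 * Real.cosh (2 * (p.1 - q.1)) * p.2.2
     + omega0 p.2.1 q.2.1 * Real.sinh (p.1 - q.1) - q.2.2)

/-- The group law `L_{(a,x,z)}(a',x',z')` on `S`. -/
def Smul {n : ℕ} (p q : S n) : S n :=
  (p.1 + q.1,
   Real.exp (-q.1) • p.2.1 + q.2.1,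
   Real.exp (-2 * q.1) * p.2.2 + q.2.2 + (1/2) * omega0 p.2.1 q.2.1 * Real.exp (-q.1))

/-- The group inverse on `S`. -/
def Sinv {n : ℕ} (p : S n) : S n :=
  (-p.1, -(Real.exp p.1) • p.2.1, -(Real.exp (2 * p.1) * p.2.2))

lemma omega0_smul_sub_left {n : ℕ} (c : ℝ) (u v w : V n) :
    omega0 ((c • u) - v) w = c * omega0 u w - omega0 v w := by
  simp [omega0, Finset.mul_sum, ← Finset.sum_sub_distrib]
  apply Finset.sum_congr rfl; intros; ring

lemma omega0_smul_sub_right {n : ℕ} (c : ℝ) (u v w : V n) :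
    omega0 w ((c • u) - v) = c * omega0 w u - omega0 w v := by
  simp [omega0, Finset.mul_sum, ← Finset.sum_sub_distrib]
  apply Finset.sum_congr rfl; intros; ring

lemma omega0_self {n : ℕ} (u : V n) : omega0 u u = 0 := by
  simp [omega0, mul_comm]

lemma omega0_comm {n : ℕ} (u v : V n) : omega0 u v = - omega0 v u := by
  simp only [omega0, ← Finset.sum_neg_distrib]
  apply Finset.sum_congr rfl; intros; ring

set_option maxHeartbeats 1000000 in
/-- the symmetric-space identity `s_x ∘ s_y ∘ s_x = s_{s_x(y)}`. -/
theorem sym_sym_sym (n : ℕ) (x y : S n) :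
    ∀ w : S n, sym x (sym y (sym x w)) = sym (sym x y) w := by
  rintro ⟨c, p, r⟩
  obtain ⟨a, u, z⟩ := x
  obtain ⟨b, v, t⟩ := y
  simp only [sym, omega0_smul_sub_left, omega0_smul_sub_right, Prod.mk.injEq]
  refine ⟨by ring, ?_, ?_⟩
  · apply Prod.ext <;> funext i <;>
      simp only [Prod.smul_fst, Prod.smul_snd, Prod.fst_sub, Prod.snd_sub, Pi.smul_apply,
        Pi.sub_apply, smul_eq_mul, Real.cosh_eq, two_mul, Real.exp_add, Real.exp_sub,
        Real.exp_neg, neg_sub] <;>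
      field_simp <;> ring
  · rw [omega0_comm v u]
    simp only [omega0_self]
    simp only [Real.cosh_eq, Real.sinh_eq, two_mul, Real.exp_add, Real.exp_sub,
      Real.exp_neg, neg_sub]
    field_simp
    ring
end
end

section
/- The symmetry map is equivariant under left translations: for all x, y, w ∈ S, x · s_y(x^{-1} · w) = s_{x·y}(w), where · is the group product of S. -/
noncomputable section

lemma omega0_add_left {n : ℕ} (u v w : V n) :
    omega0 (n := n) (u.1 + v.1, u.2 + v.2) w = omega0 u w + omega0 v w := by
  simp only [omega0, ← Finset.sum_add_distrib, ← Finset.sum_sub_distrib]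
  apply Finset.sum_congr rfl; intros; simp [mul_comm]; ring

lemma omega0_smul_left {n : ℕ} (c : ℝ) (u w : V n) :
    omega0 (n := n) (c • u.1, c • u.2) w = c * omega0 u w := by
  simp only [omega0, Finset.mul_sum, mul_sub, ← Finset.sum_sub_distrib]
  apply Finset.sum_congr rfl; intros; simp [mul_comm]; ring

lemma omega0_add_right {n : ℕ} (u v w : V n) :
    omega0 (n := n) w (u.1 + v.1, u.2 + v.2) = omega0 w u + omega0 w v := by
  simp only [omega0, ← Finset.sum_add_distrib, ← Finset.sum_sub_distrib]
  apply Finset.sum_congr rfl; intros; simp [mul_comm]; ring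

lemma omega0_smul_right {n : ℕ} (c : ℝ) (u w : V n) :
    omega0 (n := n) w (c • u.1, c • u.2) = c * omega0 w u := by
  simp only [omega0, Finset.mul_sum, mul_sub, ← Finset.sum_sub_distrib]
  apply Finset.sum_congr rfl; intros; simp [mul_comm]; ring

set_option maxHeartbeats 1000000 in
/-- equivariance of the symmetries under left translations:
`x · s_y(x⁻¹ · w) = s_{x·y}(w)`. -/
theorem sym_equivariant (n : ℕ) (x y w : S n) :
    Smul x (sym y (Smul (Sinv x) w)) = sym (Smul x y) w := by
  obtain ⟨a, ⟨u1, u2⟩, z⟩ := x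
  obtain ⟨b, ⟨v1, v2⟩, t⟩ := y
  obtain ⟨c, ⟨r1, r2⟩, s⟩ := w
  simp only [Smul, sym, Sinv, Prod.mk.injEq]
  refine ⟨by ring, ?_, ?_⟩
  · ext i <;>
      simp [Real.cosh_eq, Real.exp_add, Real.exp_sub, Real.exp_neg, two_mul,
        Pi.add_apply, Pi.smul_apply, Pi.sub_apply, Pi.neg_apply, smul_eq_mul] <;>
      field_simp <;> ring
  · have ladd : ∀ (f g f' g' : Fin n → ℝ) (w : V n),
        omega0 (n := n) (f + f', g + g') w = omega0 (f, g) w + omega0 (f', g') w :=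
      fun f g f' g' w => omega0_add_left (f, g) (f', g') w
    have lsmul : ∀ (c : ℝ) (f g : Fin n → ℝ) (w : V n),
        omega0 (n := n) (c • f, c • g) w = c * omega0 (f, g) w :=
      fun c f g w => omega0_smul_left c (f, g) w
    have lsub : ∀ (f g f' g' : Fin n → ℝ) (w : V n),
        omega0 (n := n) (f - f', g - g') w = omega0 (f, g) w - omega0 (f', g') w := by
      intro f g f' g' w
      simp only [omega0, ← Finset.sum_sub_distrib]
      apply Finset.sum_congr rfl; intros; simp; ring
    have lneg : ∀ (f g : Fin n → ℝ) (w : V n),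
        omega0 (n := n) (-f, -g) w = - omega0 (f, g) w := by
      intro f g w
      simp only [omega0, ← Finset.sum_neg_distrib]
      apply Finset.sum_congr rfl; intros; simp; ring
    have radd : ∀ (f g f' g' : Fin n → ℝ) (w : V n),
        omega0 (n := n) w (f + f', g + g') = omega0 w (f, g) + omega0 w (f', g') :=
      fun f g f' g' w => omega0_add_right (f, g) (f', g') w
    have rsmul : ∀ (c : ℝ) (f g : Fin n → ℝ) (w : V n),
        omega0 (n := n) w (c • f, c • g) = c * omega0 w (f, g) :=
      fun c f g w => omega0_smul_right c (f, g) w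
    have rsub : ∀ (f g f' g' : Fin n → ℝ) (w : V n),
        omega0 (n := n) w (f - f', g - g') = omega0 w (f, g) - omega0 w (f', g') := by
      intro f g f' g' w
      simp only [omega0, ← Finset.sum_sub_distrib]
      apply Finset.sum_congr rfl; intros; simp; ring
    have rneg : ∀ (f g : Fin n → ℝ) (w : V n),
        omega0 (n := n) w (-f, -g) = - omega0 w (f, g) := by
      intro f g w
      simp only [omega0, ← Finset.sum_neg_distrib]
      apply Finset.sum_congr rfl; intros; simp; ring
    have oself : ∀ u : V n, omega0 u u = 0 := by
      intro u; have := omega0_comm u u; linarith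
    simp only [Prod.mk_add_mk, Prod.smul_mk, Prod.mk_sub_mk, Prod.neg_mk, smul_eq_mul]
    simp only [ladd, lsmul, lsub, lneg, radd, rsmul, rsub, rneg,
      omega0_comm (v1, v2) (u1, u2), omega0_comm (r1, r2) (u1, u2),
      omega0_comm (r1, r2) (v1, v2), oself (u1, u2), oself (v1, v2), oself (r1, r2)]
    generalize omega0 ((u1, u2) : V n) (v1, v2) = A
    generalize omega0 ((u1, u2) : V n) (r1, r2) = B
    generalize omega0 ((v1, v2) : V n) (r1, r2) = C
    simp only [Real.cosh_eq, Real.sinh_eq, Real.exp_add, Real.exp_sub, Real.exp_neg, two_mul,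
      neg_add, neg_neg, neg_sub, neg_mul, mul_neg]
    have h1 := (Real.exp_pos a).ne'
    have h2 := (Real.exp_pos b).ne'
    have h3 := (Real.exp_pos c).ne'
    field_simp
    ring
end
end
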